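/- Fibers of near-identity C¹_H maps satisfy a vertical cone condition: for every λ > 0 there is c > 0 (for λ = 2 one may take c = 1/20) with the following property. Let B = B_R(p) ⊆ ℍₙ be an open Korányi ball and let f : ℍₙ → ℝ^(2n) be of class C¹_H with ‖D_H f_q − id‖_op < c for all q ∈ B_{5R}(p). Then for all x, y ∈ B with f(x) = f(y), one has |z(x⁻¹·y)| ≥ d(x,y)²/16 and |z(x⁻¹·y)| ≥ λ |π(x⁻¹·y)|². -/

import Mathlib

open MeasureTheory Set Filter Topology
open scoped ENNReal

noncomputable section

/-- Euclidean space `ℝ^(2n)`, the horizontal layer. -/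
abbrev E (n : ℕ) : Type := EuclideanSpace ℝ (Fin (2 * n))

/-- The Heisenberg group `ℍₙ` as a set: `ℝ^(2n) × ℝ`. -/
abbrev Hpt (n : ℕ) : Type := E n × ℝ

/-- The standard symplectic form on `ℝ^(2n)` with coordinates `(x₁,y₁,…,xₙ,yₙ)`. -/
def omegaF (n : ℕ) (u v : E n) : ℝ :=
  ∑ i : Fin n,
    (u ⟨2 * i.1, by have := i.isLt; omega⟩ * v ⟨2 * i.1 + 1, by have := i.isLt; omega⟩
     - v ⟨2 * i.1, by have := i.isLt; omega⟩ * u ⟨2 * i.1 + 1, by have := i.isLt; omega⟩)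

/-- The Heisenberg group law. -/
def hmul (n : ℕ) (a b : Hpt n) : Hpt n :=
  (a.1 + b.1, a.2 + b.2 + (1 / 2) * omegaF n a.1 b.1)

/-- The Heisenberg group inverse. -/
def hinv (n : ℕ) (a : Hpt n) : Hpt n := (-a.1, -a.2)

/-- The Korányi norm. -/
def kor (n : ℕ) (q : Hpt n) : ℝ := (‖q.1‖ ^ 4 + 16 * q.2 ^ 2) ^ ((1 : ℝ) / 4)

/-- The Korányi (left-invariant, homogeneous) distance. -/
def dK (n : ℕ) (p q : Hpt n) : ℝ := kor n (hmul n (hinv n p) q)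

/-- `f` is Pansu differentiable at `x` with horizontal differential `L`. -/
def PansuDiffAt (n : ℕ) (f : Hpt n → E n) (x : Hpt n) (L : E n →L[ℝ] E n) : Prop :=
  ∀ ε > (0 : ℝ), ∃ δ > (0 : ℝ), ∀ y : Hpt n, dK n x y < δ →
    ‖f y - f x - L ((hmul n (hinv n x) y).1)‖ ≤ ε * dK n x y

/-- `f` is of class `C¹_H` with horizontal differential `D`: it is Pansu differentiable
everywhere and `x ↦ D_H f_x` is continuous in the operator norm (w.r.t. the Korányi metric). -/
def C1H (n : ℕ) (f : Hpt n → E n) (D : Hpt n → (E n →L[ℝ] E n)) : Prop :=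
  (∀ x, PansuDiffAt n f x (D x)) ∧
  (∀ x, ∀ ε > (0 : ℝ), ∃ δ > (0 : ℝ), ∀ y : Hpt n, dK n x y < δ → ‖D y - D x‖ < ε)


/-- The vertical cone property for the parameters `lam` (cone aperture) and `c`
(closeness of the differential to the identity): whenever `f` is `C¹_H` with
`‖D_H f − id‖ < c` on `B_{5R}(p)`, any two points `x, y ∈ B_R(p)` in the same fiber of `f`
satisfy `|z(x⁻¹·y)| ≥ d(x,y)²/16` and `|z(x⁻¹·y)| ≥ lam |π(x⁻¹·y)|²`. -/
def ConeProp (n : ℕ) (lam c : ℝ) : Prop :=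
  ∀ (p : Hpt n) (R : ℝ), 0 < R →
  ∀ (f : Hpt n → E n) (D : Hpt n → (E n →L[ℝ] E n)), C1H n f D →
  (∀ q : Hpt n, dK n p q < 5 * R → ‖D q - ContinuousLinearMap.id ℝ (E n)‖ < c) →
  ∀ x y : Hpt n, dK n p x < R → dK n p y < R → f x = f y →
    dK n x y ^ 2 / 16 ≤ |(hmul n (hinv n x) y).2| ∧
    lam * ‖(hmul n (hinv n x) y).1‖ ^ 2 ≤ |(hmul n (hinv n x) y).2|

variable {n : ℕ}


lemma omegaF_add_left (u u' v : E n) : omegaF n (u + u') v = omegaF n u v + omegaF n u' v := by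
  unfold omegaF
  rw [← Finset.sum_add_distrib]
  exact Finset.sum_congr rfl fun i _ => by simp [PiLp.add_apply]; ring

lemma omegaF_add_right (u v v' : E n) : omegaF n u (v + v') = omegaF n u v + omegaF n u v' := by
  unfold omegaF
  rw [← Finset.sum_add_distrib]
  exact Finset.sum_congr rfl fun i _ => by simp [PiLp.add_apply]; ring

lemma omegaF_smul_left (r : ℝ) (u v : E n) : omegaF n (r • u) v = r * omegaF n u v := by
  unfold omegaF
  rw [Finset.mul_sum]
  exact Finset.sum_congr rfl fun i _ => by simp [PiLp.smul_apply, smul_eq_mul]; ring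

lemma omegaF_smul_right (r : ℝ) (u v : E n) : omegaF n u (r • v) = r * omegaF n u v := by
  unfold omegaF
  rw [Finset.mul_sum]
  exact Finset.sum_congr rfl fun i _ => by simp [PiLp.smul_apply, smul_eq_mul]; ring

lemma omegaF_anti (u v : E n) : omegaF n v u = - omegaF n u v := by
  unfold omegaF
  rw [← Finset.sum_neg_distrib]
  exact Finset.sum_congr rfl fun i _ => by ring

lemma omegaF_self (u : E n) : omegaF n u u = 0 := by
  have := omegaF_anti u u; linarith

lemma omegaF_zero_left (v : E n) : omegaF n 0 v = 0 := by
  have h := omegaF_smul_left 0 0 v; simpa using h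

lemma omegaF_zero_right (v : E n) : omegaF n v 0 = 0 := by
  rw [omegaF_anti, omegaF_zero_left]; ring

lemma omegaF_neg_left (u v : E n) : omegaF n (-u) v = - omegaF n u v := by
  have h := omegaF_smul_left (-1) u v; simpa using h

lemma omegaF_neg_right (u v : E n) : omegaF n u (-v) = - omegaF n u v := by
  have h := omegaF_smul_right (-1) u v; simpa using h

lemma hmul_assoc (a b c : Hpt n) : hmul n (hmul n a b) c = hmul n a (hmul n b c) := by
  unfold hmul
  refine Prod.ext ?_ ?_
  · simp [add_assoc]
  · simp only [omegaF_add_left, omegaF_add_right]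
    ring

lemma hinv_hmul_cancel (a b : Hpt n) : hmul n (hinv n a) (hmul n a b) = b := by
  unfold hmul hinv
  refine Prod.ext ?_ ?_
  · simp [add_comm, ← add_assoc]
  · simp only [omegaF_add_right, omegaF_neg_left, omegaF_self]
    ring

lemma hmul_hinv_cancel (a b : Hpt n) : hmul n a (hmul n (hinv n a) b) = b := by
  unfold hmul hinv
  refine Prod.ext ?_ ?_
  · simp [← add_assoc]
  · simp only [omegaF_add_right, omegaF_neg_left, omegaF_self, omegaF_neg_right]
    ring

lemma hinv_hmul (a b : Hpt n) : hinv n (hmul n a b) = hmul n (hinv n b) (hinv n a) := by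
  unfold hmul hinv
  refine Prod.ext ?_ ?_
  · simp [add_comm]
  · simp only [omegaF_neg_left, omegaF_neg_right]
    rw [omegaF_anti b.1 a.1]
    simp; ring

lemma hmul_zero_right (a : Hpt n) : hmul n a (0 : Hpt n) = a := by
  unfold hmul
  refine Prod.ext ?_ ?_
  · simp
  · have : (0 : Hpt n).1 = 0 := rfl
    simp [this, omegaF_zero_right]


/-- pairing indices -/
def idx0 (i : Fin n) : Fin (2*n) := ⟨2 * i.1, by have := i.isLt; omega⟩
def idx1 (i : Fin n) : Fin (2*n) := ⟨2 * i.1 + 1, by have := i.isLt; omega⟩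

lemma omegaF_eq (u v : E n) :
    omegaF n u v = ∑ i : Fin n, (u (idx0 i) * v (idx1 i) - v (idx0 i) * u (idx1 i)) := rfl

lemma sum_range_pair (m : ℕ) (g : ℕ → ℝ) :
    ∑ j ∈ Finset.range (2*m), g j = ∑ i ∈ Finset.range m, (g (2*i) + g (2*i+1)) := by
  induction m with
  | zero => simp
  | succ k ih =>
    rw [Nat.mul_succ, Finset.sum_range_succ, Finset.sum_range_succ, Finset.sum_range_succ, ih]
    ring

lemma sum_pair (g : Fin (2*n) → ℝ) :
    ∑ j : Fin (2*n), g j = ∑ i : Fin n, (g (idx0 i) + g (idx1 i)) := by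
  classical
  set G : ℕ → ℝ := fun j => if h : j < 2*n then g ⟨j, h⟩ else 0 with hG
  have h1 : ∑ j : Fin (2*n), g j = ∑ j ∈ Finset.range (2*n), G j := by
    rw [← Fin.sum_univ_eq_sum_range]
    exact Finset.sum_congr rfl fun j _ => by simp [hG, j.isLt]
  have h2 : ∑ i : Fin n, (g (idx0 i) + g (idx1 i))
      = ∑ i ∈ Finset.range n, (G (2*i) + G (2*i+1)) := by
    rw [← Fin.sum_univ_eq_sum_range]
    refine Finset.sum_congr rfl fun i _ => ?_
    have l0 : (2*(i:ℕ) < 2*n) := by have := i.isLt; omega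
    have l1 : (2*(i:ℕ)+1 < 2*n) := by have := i.isLt; omega
    simp [hG, l0, l1, idx0, idx1]
  rw [h1, h2, sum_range_pair]

/-- squared norm as sum of squares -/
lemma norm_sq_sum (u : E n) : ‖u‖^2 = ∑ j : Fin (2*n), (u j)^2 := by
  rw [EuclideanSpace.norm_eq, Real.sq_sqrt (by positivity)]
  exact Finset.sum_congr rfl fun j _ => by rw [Real.norm_eq_abs, sq_abs]

def SIP (u v : E n) : ℝ := ∑ j : Fin (2*n), u j * v j

lemma norm_sq_SIP (u : E n) : ‖u‖^2 = SIP u u := by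
  rw [norm_sq_sum]; exact Finset.sum_congr rfl fun j _ => (sq (u j)) ▸ (pow_two (u j))

lemma norm_add_sq_SIP (u v : E n) : ‖u + v‖^2 = ‖u‖^2 + 2 * SIP u v + ‖v‖^2 := by
  rw [norm_sq_sum, norm_sq_sum, norm_sq_sum]
  unfold SIP
  rw [Finset.mul_sum, ← Finset.sum_add_distrib, ← Finset.sum_add_distrib]
  exact Finset.sum_congr rfl fun j _ => by simp [PiLp.add_apply]; ring

/-- Complex Cauchy–Schwarz for the pair (inner, symplectic). -/
lemma cs_pair (u v : E n) : (SIP u v)^2 + (omegaF n u v)^2 ≤ ‖u‖^2 * ‖v‖^2 := by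
  classical
  set z : Fin n → ℂ := fun i =>
    ((u (idx0 i) : ℂ) - (u (idx1 i) : ℂ) * Complex.I) *
    ((v (idx0 i) : ℂ) + (v (idx1 i) : ℂ) * Complex.I) with hz
  have hre : (∑ i : Fin n, z i).re = SIP u v := by
    rw [Complex.re_sum]
    unfold SIP
    rw [sum_pair (fun j => u j * v j)]
    exact Finset.sum_congr rfl fun i _ => by simp [hz]; try ring
  have him : (∑ i : Fin n, z i).im = omegaF n u v := by
    rw [Complex.im_sum, omegaF_eq]
    exact Finset.sum_congr rfl fun i _ => by simp [hz]; try ring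
  have habs : (SIP u v)^2 + (omegaF n u v)^2 = ‖∑ i : Fin n, z i‖ ^ 2 := by
    rw [Complex.sq_norm, Complex.normSq_apply, hre, him]; ring
  have habsz : ∀ i : Fin n, ‖z i‖
      = Real.sqrt ((u (idx0 i))^2 + (u (idx1 i))^2) *
        Real.sqrt ((v (idx0 i))^2 + (v (idx1 i))^2) := by
    intro i
    rw [← Real.sqrt_mul (by positivity)]
    rw [Complex.norm_def]
    congr 1
    rw [Complex.normSq_apply]
    simp [hz]
    ring
  have h1 : ‖∑ i : Fin n, z i‖ ≤ ∑ i : Fin n, ‖z i‖ := by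
    simpa using norm_sum_le Finset.univ z
  have h2 : (∑ i : Fin n, ‖z i‖)^2 ≤ ‖u‖^2 * ‖v‖^2 := by
    have := Finset.sum_mul_sq_le_sq_mul_sq Finset.univ
      (fun i : Fin n => Real.sqrt ((u (idx0 i))^2 + (u (idx1 i))^2))
      (fun i : Fin n => Real.sqrt ((v (idx0 i))^2 + (v (idx1 i))^2))
    have hu : ∑ i : Fin n, (Real.sqrt ((u (idx0 i))^2 + (u (idx1 i))^2))^2 = ‖u‖^2 := by
      rw [norm_sq_sum, sum_pair (fun j => (u j)^2)]
      exact Finset.sum_congr rfl fun i _ => Real.sq_sqrt (by positivity)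
    have hv : ∑ i : Fin n, (Real.sqrt ((v (idx0 i))^2 + (v (idx1 i))^2))^2 = ‖v‖^2 := by
      rw [norm_sq_sum, sum_pair (fun j => (v j)^2)]
      exact Finset.sum_congr rfl fun i _ => Real.sq_sqrt (by positivity)
    calc (∑ i : Fin n, ‖z i‖)^2
        = (∑ i : Fin n, Real.sqrt ((u (idx0 i))^2 + (u (idx1 i))^2) *
            Real.sqrt ((v (idx0 i))^2 + (v (idx1 i))^2))^2 := by
          congr 1; exact Finset.sum_congr rfl fun i _ => habsz i
      _ ≤ _ := by rw [← hu, ← hv]; exact this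
  calc (SIP u v)^2 + (omegaF n u v)^2 = ‖∑ i : Fin n, z i‖ ^ 2 := habs
    _ ≤ (∑ i : Fin n, ‖z i‖)^2 := by
        apply pow_le_pow_left₀ (by positivity) h1
    _ ≤ ‖u‖^2 * ‖v‖^2 := h2

lemma abs_omegaF_le (u v : E n) : |omegaF n u v| ≤ ‖u‖ * ‖v‖ := by
  have h := cs_pair u v
  have h2 : (omegaF n u v)^2 ≤ (‖u‖ * ‖v‖)^2 := by nlinarith [sq_nonneg (SIP u v)]
  calc |omegaF n u v| = Real.sqrt ((omegaF n u v)^2) := (Real.sqrt_sq_eq_abs _).symm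
    _ ≤ Real.sqrt ((‖u‖*‖v‖)^2) := Real.sqrt_le_sqrt h2
    _ = ‖u‖ * ‖v‖ := Real.sqrt_sq (by positivity)

lemma kor_nonneg (p : Hpt n) : 0 ≤ kor n p := Real.rpow_nonneg (by positivity) _

lemma kor_pow4 (p : Hpt n) : kor n p ^ 4 = ‖p.1‖^4 + 16 * p.2^2 := by
  unfold kor
  rw [← Real.rpow_natCast ((‖p.1‖ ^ 4 + 16 * p.2 ^ 2) ^ ((1:ℝ)/4)) 4,
    ← Real.rpow_mul (by positivity)]
  norm_num

lemma kor_sq (p : Hpt n) : kor n p ^ 2 = Real.sqrt (‖p.1‖^4 + 16 * p.2^2) := by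
  unfold kor
  rw [← Real.rpow_natCast ((‖p.1‖ ^ 4 + 16 * p.2 ^ 2) ^ ((1:ℝ)/4)) 2,
    ← Real.rpow_mul (by positivity), Real.sqrt_eq_rpow]
  norm_num

lemma kor_le_of_pow4 (p : Hpt n) (M : ℝ) (hM : 0 ≤ M) (h : kor n p ^ 4 ≤ M ^ 4) :
    kor n p ≤ M := le_of_pow_le_pow_left₀ (by norm_num) hM h

lemma horiz_le_kor (p : Hpt n) : ‖p.1‖ ≤ kor n p := by
  apply le_of_pow_le_pow_left₀ (by norm_num : (4:ℕ) ≠ 0) (kor_nonneg p)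
  rw [kor_pow4]; nlinarith [sq_nonneg p.2]

lemma vert_le_kor (p : Hpt n) : 2 * Real.sqrt |p.2| ≤ kor n p := by
  apply le_of_pow_le_pow_left₀ (by norm_num : (4:ℕ) ≠ 0) (kor_nonneg p)
  rw [kor_pow4]
  have h1 : (2 * Real.sqrt |p.2|)^4 = 16 * (Real.sqrt |p.2|)^4 := by ring
  have h2 : (Real.sqrt |p.2|)^4 = |p.2|^2 := by
    rw [show (4:ℕ) = 2*2 from rfl, pow_mul, Real.sq_sqrt (abs_nonneg _)]
  rw [h1, h2, sq_abs]
  nlinarith [sq_nonneg ‖p.1‖, sq_nonneg (‖p.1‖^2)]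

lemma kor_horizontal (w : E n) : kor n ((w, (0:ℝ)) : Hpt n) = ‖w‖ := by
  unfold kor
  simp only [mul_zero, add_zero]
  norm_num
  rw [← Real.rpow_natCast ‖w‖ 4, ← Real.rpow_mul (norm_nonneg w)]
  norm_num

lemma kor_hinv (p : Hpt n) : kor n (hinv n p) = kor n p := by
  unfold kor hinv; simp

/-- Cygan's triangle inequality for the Korányi norm. -/
lemma kor_triangle (a b : Hpt n) : kor n (hmul n a b) ≤ kor n a + kor n b := by
  have key : kor n (hmul n a b) ^ 2 ≤ (kor n a + kor n b) ^ 2 := by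
    rw [kor_sq]
    set A := a.1; set B := b.1
    set S := SIP A B; set W := omegaF n A B
    have h1 : (hmul n a b).1 = A + B := rfl
    have h2 : (hmul n a b).2 = a.2 + b.2 + (1/2) * W := rfl
    rw [h1, h2]
    set ca : ℂ := ⟨‖A‖^2, 4 * a.2⟩
    set cb : ℂ := ⟨‖B‖^2, 4 * b.2⟩
    set w : ℂ := ⟨S, W⟩
    have hsum : ‖A + B‖^4 + 16 * (a.2 + b.2 + (1/2)*W)^2 = ‖ca + cb + 2*w‖ ^2 := by
      rw [Complex.sq_norm, Complex.normSq_apply]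
      have hre : (ca + cb + 2*w).re = ‖A‖^2 + ‖B‖^2 + 2*S := by
        simp [ca, cb, w, Complex.add_re, Complex.mul_re]
      have him : (ca + cb + 2*w).im = 4*a.2 + 4*b.2 + 2*W := by
        simp [ca, cb, w, Complex.add_im, Complex.mul_im]
      rw [hre, him, show ‖A+B‖^4 = (‖A+B‖^2)^2 by ring, norm_add_sq_SIP]
      ring
    have hca : ‖ca‖ = kor n a ^ 2 := by
      rw [kor_sq, Complex.norm_def, Complex.normSq_apply]
      congr 1
      simp [ca]; ring
    have hcb : ‖cb‖ = kor n b ^ 2 := by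
      rw [kor_sq, Complex.norm_def, Complex.normSq_apply]
      congr 1
      simp [cb]; ring
    have hw : ‖w‖ ≤ kor n a * kor n b := by
      have h3 : ‖w‖ = Real.sqrt (S^2 + W^2) := by
        rw [Complex.norm_def, Complex.normSq_apply]; congr 1; simp [w]; ring
      have h4 : Real.sqrt (S^2+W^2) ≤ Real.sqrt ((‖A‖*‖B‖)^2) := by
        apply Real.sqrt_le_sqrt
        have := cs_pair A B; nlinarith
      rw [h3]
      calc Real.sqrt (S^2+W^2) ≤ Real.sqrt ((‖A‖*‖B‖)^2) := h4
        _ = ‖A‖*‖B‖ := Real.sqrt_sq (by positivity)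
        _ ≤ kor n a * kor n b := by
            apply mul_le_mul (horiz_le_kor a) (horiz_le_kor b) (norm_nonneg _) (kor_nonneg a)
    calc Real.sqrt (‖A + B‖^4 + 16 * (a.2 + b.2 + (1/2)*W)^2)
        = ‖ca + cb + 2*w‖ := by rw [hsum, Real.sqrt_sq (by positivity)]
      _ ≤ ‖ca‖ + ‖cb‖ + ‖2*w‖ := by
          calc ‖ca + cb + 2*w‖ ≤ ‖ca + cb‖ + ‖2*w‖ :=
                norm_add_le _ _
            _ ≤ ‖ca‖ + ‖cb‖ + ‖2*w‖ := by
                have := norm_add_le ca cb; linarith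
      _ ≤ kor n a ^2 + kor n b ^2 + 2 * (kor n a * kor n b) := by
          rw [hca, hcb]
          have : ‖2*w‖ = 2 * ‖w‖ := by
            rw [norm_mul]; norm_num
          rw [this]; linarith [hw]
      _ = (kor n a + kor n b)^2 := by ring
  calc kor n (hmul n a b) = Real.sqrt (kor n (hmul n a b) ^2) :=
        (Real.sqrt_sq (kor_nonneg _)).symm
    _ ≤ Real.sqrt ((kor n a + kor n b)^2) := Real.sqrt_le_sqrt key
    _ = kor n a + kor n b := Real.sqrt_sq (add_nonneg (kor_nonneg a) (kor_nonneg b))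

lemma dK_triangle (p q r : Hpt n) : dK n p r ≤ dK n p q + dK n q r := by
  unfold dK
  have h : hmul n (hinv n p) r = hmul n (hmul n (hinv n p) q) (hmul n (hinv n q) r) := by
    rw [hmul_assoc, hmul_hinv_cancel]
  rw [h]
  exact kor_triangle _ _

lemma dK_symm (p q : Hpt n) : dK n p q = dK n q p := by
  unfold dK
  rw [← kor_hinv (hmul n (hinv n q) p), hinv_hmul]
  congr 1
  unfold hinv; simp

lemma seg_product (q : Hpt n) (v : E n) (s s' : ℝ) :
    hmul n (hinv n (hmul n q (s • v, 0))) (hmul n q (s' • v, 0)) = ((s' - s) • v, (0:ℝ)) := by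
  unfold hmul hinv
  refine Prod.ext ?_ ?_
  · show -(q.1 + s • v) + (q.1 + s' • v) = (s' - s) • v
    rw [sub_smul]; abel
  · show -(q.2 + 0 + 1/2 * omegaF n q.1 (s • v)) + (q.2 + 0 + 1/2 * omegaF n q.1 (s' • v))
      + 1/2 * omegaF n (-(q.1 + s • v)) (q.1 + s' • v) = 0
    simp only [omegaF_neg_left, omegaF_add_left, omegaF_add_right, omegaF_smul_left,
      omegaF_smul_right, omegaF_self]
    rw [show omegaF n v q.1 = - omegaF n q.1 v from omegaF_anti q.1 v]
    ring

lemma seg_dist (q : Hpt n) (v : E n) (s s' : ℝ) :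
    dK n (hmul n q (s • v, 0)) (hmul n q (s' • v, 0)) = |s' - s| * ‖v‖ := by
  unfold dK
  rw [seg_product, kor_horizontal, norm_smul, Real.norm_eq_abs]

/-- Mean value estimate along a horizontal segment. -/
lemma seg_estimate {f : Hpt n → E n} {D : Hpt n → (E n →L[ℝ] E n)} (hf : C1H n f D)
    (c : ℝ) (hc : 0 ≤ c) (q : Hpt n) (v : E n)
    (hD : ∀ s ∈ Icc (0:ℝ) 1, ‖D (hmul n q (s • v, 0)) - ContinuousLinearMap.id ℝ (E n)‖ ≤ c) :
    ‖f (hmul n q (v, 0)) - f q - v‖ ≤ c * ‖v‖ := by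
  set γ : ℝ → Hpt n := fun s => hmul n q (s • v, 0) with hγ
  have hderiv : ∀ s : ℝ, HasDerivAt (fun t => f (γ t)) (D (γ s) v) s := by
    intro s
    rw [hasDerivAt_iff_isLittleO, Asymptotics.isLittleO_iff]
    intro ε hε
    obtain ⟨δ, hδ, hP⟩ := hf.1 (γ s) (ε / (‖v‖ + 1)) (by positivity)
    rw [Metric.eventually_nhds_iff]
    refine ⟨δ / (‖v‖ + 1), by positivity, fun s' hs' => ?_⟩
    have hd : dK n (γ s) (γ s') = |s' - s| * ‖v‖ := seg_dist q v s s'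
    have hss : |s' - s| < δ / (‖v‖ + 1) := by
      rwa [Real.dist_eq] at hs'
    have hdlt : dK n (γ s) (γ s') < δ := by
      rw [hd]
      calc |s' - s| * ‖v‖ ≤ |s' - s| * (‖v‖ + 1) := by
            apply mul_le_mul_of_nonneg_left (by linarith) (abs_nonneg _)
        _ < δ / (‖v‖ + 1) * (‖v‖ + 1) := by
            apply mul_lt_mul_of_pos_right hss (by positivity)
        _ = δ := by field_simp
    have := hP (γ s') hdlt
    rw [seg_product] at this
    rw [ContinuousLinearMap.map_smul] at this
    calc ‖f (γ s') - f (γ s) - (s' - s) • D (γ s) v‖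
        ≤ ε / (‖v‖ + 1) * dK n (γ s) (γ s') := this
      _ = ε / (‖v‖ + 1) * (|s' - s| * ‖v‖) := by rw [hd]
      _ ≤ ε * ‖s' - s‖ := by
          rw [Real.norm_eq_abs, div_mul_eq_mul_div, div_le_iff₀ (by positivity)]
          nlinarith [norm_nonneg v, abs_nonneg (s' - s), hε.le]
  have hψ : ∀ s ∈ Icc (0:ℝ) 1, HasDerivWithinAt (fun t => f (γ t) - t • v)
      (D (γ s) v - v) (Icc (0:ℝ) 1) s := by
    intro s _
    have h1 := (hderiv s).sub ((hasDerivAt_id s).smul_const v)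
    rw [one_smul] at h1
    exact h1.hasDerivWithinAt
  have hbd : ∀ s ∈ Ico (0:ℝ) 1, ‖D (γ s) v - v‖ ≤ c * ‖v‖ := by
    intro s hs
    have h2 : D (γ s) v - v = (D (γ s) - ContinuousLinearMap.id ℝ (E n)) v := by
      simp
    rw [h2]
    calc ‖(D (γ s) - ContinuousLinearMap.id ℝ (E n)) v‖
        ≤ ‖D (γ s) - ContinuousLinearMap.id ℝ (E n)‖ * ‖v‖ :=
          ContinuousLinearMap.le_opNorm _ v
      _ ≤ c * ‖v‖ := by
          apply mul_le_mul_of_nonneg_right (hD s (Ico_subset_Icc_self hs)) (norm_nonneg v)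
  have := norm_image_sub_le_of_norm_deriv_le_segment' hψ hbd 1 (by norm_num : (1:ℝ) ∈ Icc (0:ℝ) 1)
  simp only [one_smul, zero_smul, sub_zero] at this
  have hγ1 : γ 1 = hmul n q (v, 0) := by rw [hγ]; simp
  have hγ0 : γ 0 = q := by
    rw [hγ]; simp only [zero_smul]
    exact hmul_zero_right q
  rw [hγ1, hγ0] at this
  calc ‖f (hmul n q (v, 0)) - f q - v‖ = ‖f (hmul n q (v, 0)) - v - f q‖ := by
        rw [sub_right_comm]
    _ ≤ c * ‖v‖ * 1 := this
    _ = c * ‖v‖ := by ring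

section Singles

def i0 (hn : 1 ≤ n) : Fin (2*n) := ⟨0, by omega⟩
def i1 (hn : 1 ≤ n) : Fin (2*n) := ⟨1, by omega⟩

def E0 (hn : 1 ≤ n) : E n := EuclideanSpace.single (i0 hn) (1:ℝ)
def E1 (hn : 1 ≤ n) : E n := EuclideanSpace.single (i1 hn) (1:ℝ)

lemma omega_E01 (hn : 1 ≤ n) : omegaF n (E0 hn) (E1 hn) = 1 := by
  rw [omegaF_eq]
  rw [Finset.sum_eq_single (⟨0, by omega⟩ : Fin n)]
  · simp [E0, E1, idx0, idx1, i0, i1, EuclideanSpace.single_apply, Fin.ext_iff]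
  · intro b _ hb
    have hb' : b.1 ≠ 0 := fun h => hb (Fin.ext h)
    simp [E0, E1, idx0, idx1, i0, i1, EuclideanSpace.single_apply, Fin.ext_iff]
    omega
  · intro h; exact absurd (Finset.mem_univ _) h

lemma omega_E00 (hn : 1 ≤ n) : omegaF n (E0 hn) (E0 hn) = 0 := omegaF_self _
lemma omega_E11 (hn : 1 ≤ n) : omegaF n (E1 hn) (E1 hn) = 0 := omegaF_self _
lemma omega_E10 (hn : 1 ≤ n) : omegaF n (E1 hn) (E0 hn) = -1 := by
  rw [omegaF_anti, omega_E01]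

lemma omega_combo (hn : 1 ≤ n) (s0 s1 t0 t1 : ℝ) :
    omegaF n (s0 • E0 hn + s1 • E1 hn) (t0 • E0 hn + t1 • E1 hn) = s0*t1 - s1*t0 := by
  simp only [omegaF_add_left, omegaF_add_right, omegaF_smul_left, omegaF_smul_right,
    omega_E01, omega_E00, omega_E11, omega_E10]
  ring

lemma norm_combo (hn : 1 ≤ n) (s0 s1 : ℝ) : ‖s0 • E0 hn + s1 • E1 hn‖^2 = s0^2 + s1^2 := by
  rw [norm_sq_sum]
  have key : ∀ j : Fin (2*n), ((s0 • E0 hn + s1 • E1 hn) j)^2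
      = (if j = i0 hn then s0^2 else 0) + (if j = i1 hn then s1^2 else 0) := by
    intro j
    have happ : (s0 • E0 hn + s1 • E1 hn) j
        = s0 * (if j = i0 hn then 1 else 0) + s1 * (if j = i1 hn then 1 else 0) := by
      simp [E0, E1, PiLp.add_apply, PiLp.smul_apply, EuclideanSpace.single_apply]
    rw [happ]
    have h01 : i0 hn ≠ i1 hn := by simp [i0, i1, Fin.ext_iff]
    by_cases h0 : j = i0 hn
    · have h1 : j ≠ i1 hn := by rw [h0]; exact h01
      simp [h0, h1, h01, Ne.symm h01]; try ring
    · by_cases h1 : j = i1 hn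
      · simp [h0, h1, h01, Ne.symm h01]; try ring
      · simp [h0, h1]
  rw [Finset.sum_congr rfl (fun j _ => key j), Finset.sum_add_distrib]
  simp [Finset.sum_ite_eq']

lemma norm_E0_smul (hn : 1 ≤ n) (r : ℝ) : ‖r • E0 hn‖ = |r| := by
  rw [norm_smul, Real.norm_eq_abs, E0, EuclideanSpace.norm_single]
  simp

lemma norm_E1_smul (hn : 1 ≤ n) (r : ℝ) : ‖r • E1 hn‖ = |r| := by
  rw [norm_smul, Real.norm_eq_abs, E1, EuclideanSpace.norm_single]
  simp

end Singles

/-- Korányi bound for points of the square path shifted by the horizontal displacement. -/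
lemma kor_path_bound (h' P : E n) (τ b d : ℝ) (hb : 0 ≤ b)
    (hh : ‖h'‖ ≤ d) (hP : ‖P‖^2 ≤ 2*b^2) (hτ : |τ| ≤ b^2) (hbd : 2*b ≤ d) :
    kor n (hmul n ((h', 0) : Hpt n) ((P, τ) : Hpt n)) ≤ 2*d := by
  have hd0 : 0 ≤ d := le_trans (norm_nonneg h') hh
  apply kor_le_of_pow4 _ _ (by linarith)
  rw [kor_pow4]
  have h1 : (hmul n ((h', 0) : Hpt n) ((P, τ) : Hpt n)).1 = h' + P := rfl
  have h2 : (hmul n ((h', 0) : Hpt n) ((P, τ) : Hpt n)).2 = 0 + τ + (1/2) * omegaF n h' P := rfl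
  rw [h1, h2]
  set r2 := Real.sqrt 2 with hr2
  have hr2sq : r2^2 = 2 := Real.sq_sqrt (by norm_num)
  have hr20 : 0 ≤ r2 := Real.sqrt_nonneg 2
  have hr2le : r2 ≤ 7/4 := by
    rw [hr2, show (7:ℝ)/4 = Real.sqrt ((7/4)^2) from (Real.sqrt_sq (by norm_num)).symm]
    apply Real.sqrt_le_sqrt; norm_num
  have hPn : ‖P‖ ≤ r2 * b := by
    have : (r2*b)^2 = 2*b^2 := by rw [mul_pow, hr2sq]
    apply le_of_pow_le_pow_left₀ (two_ne_zero) (by positivity)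
    rw [this]; exact hP
  have hX : ‖h' + P‖ ≤ (1 + r2/2) * d := by
    calc ‖h' + P‖ ≤ ‖h'‖ + ‖P‖ := norm_add_le _ _
      _ ≤ d + r2 * b := add_le_add hh hPn
      _ ≤ d + r2 * (d/2) := by
          have : b ≤ d/2 := by linarith
          have := mul_le_mul_of_nonneg_left this hr20
          linarith
      _ = (1 + r2/2) * d := by ring
  have hY : |0 + τ + (1/2) * omegaF n h' P| ≤ ((1 + r2)/4) * d^2 := by
    have hω : |omegaF n h' P| ≤ d * (r2 * b) := by
      calc |omegaF n h' P| ≤ ‖h'‖ * ‖P‖ := abs_omegaF_le h' P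
        _ ≤ d * (r2 * b) := by
            apply mul_le_mul hh hPn (norm_nonneg _) hd0
    calc |0 + τ + (1/2) * omegaF n h' P| ≤ |τ| + (1/2) * |omegaF n h' P| := by
          rw [zero_add]
          calc |τ + (1/2) * omegaF n h' P| ≤ |τ| + |(1/2) * omegaF n h' P| := abs_add_le _ _
            _ = |τ| + (1/2) * |omegaF n h' P| := by rw [abs_mul]; norm_num
      _ ≤ b^2 + (1/2) * (d * (r2 * b)) := by
          have := mul_le_mul_of_nonneg_left hω (by norm_num : (0:ℝ) ≤ 1/2)
          linarith
      _ ≤ (d/2)^2 + (1/2) * (d * (r2 * (d/2))) := by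
          have hb2 : b ≤ d/2 := by linarith
          have e1 : b^2 ≤ (d/2)^2 := pow_le_pow_left₀ hb hb2 2
          have e2 : d * (r2 * b) ≤ d * (r2 * (d/2)) := by
            apply mul_le_mul_of_nonneg_left _ hd0
            exact mul_le_mul_of_nonneg_left hb2 hr20
          linarith
      _ = ((1 + r2)/4) * d^2 := by ring
  have hX4 : ‖h' + P‖^4 ≤ ((1 + r2/2) * d)^4 :=
    pow_le_pow_left₀ (norm_nonneg _) hX 4
  have hY2 : (0 + τ + (1/2) * omegaF n h' P)^2 ≤ (((1 + r2)/4) * d^2)^2 := by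
    rw [← sq_abs]
    exact pow_le_pow_left₀ (abs_nonneg _) hY 2
  have e1 : ((1 + r2/2) * d)^4 = (17/4 + 3*r2) * d^4 := by
    have h2 : r2^2 = 2 := hr2sq
    linear_combination ((r2^2/16 + r2/2 + 13/8) * d^4) * h2
  have e2 : 16 * (((1 + r2)/4) * d^2)^2 = (3 + 2*r2) * d^4 := by
    have h2 : r2^2 = 2 := hr2sq
    linear_combination d^4 * h2
  have efin : (17/4 + 3*r2) * d^4 + (3 + 2*r2) * d^4 ≤ (2*d)^4 := by
    have hd4 : 0 ≤ d^4 := by positivity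
    nlinarith [mul_nonneg hd4 (by linarith : (0:ℝ) ≤ 7/4 - r2)]
  nlinarith [hX4, hY2, e1, e2, efin]

lemma sq_step (hn : 1 ≤ n) (a0 a1 T m0 m1 s : ℝ) :
    hmul n ((a0 • E0 hn + a1 • E1 hn), T) (s • (m0 • E0 hn + m1 • E1 hn), 0)
    = ((a0 + s*m0) • E0 hn + (a1 + s*m1) • E1 hn,
       T + (1/2)*(a0*(s*m1) - a1*(s*m0))) := by
  unfold hmul
  refine Prod.ext ?_ ?_
  · show a0 • E0 hn + a1 • E1 hn + s • (m0 • E0 hn + m1 • E1 hn)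
      = (a0 + s*m0) • E0 hn + (a1 + s*m1) • E1 hn
    module
  · show T + 0 + (1/2) * omegaF n (a0 • E0 hn + a1 • E1 hn) (s • (m0 • E0 hn + m1 • E1 hn))
      = T + (1/2)*(a0*(s*m1) - a1*(s*m0))
    rw [omegaF_smul_right, omega_combo]
    ring

lemma sq_step1 (hn : 1 ≤ n) (a0 a1 T m0 m1 : ℝ) :
    hmul n ((a0 • E0 hn + a1 • E1 hn), T) ((m0 • E0 hn + m1 • E1 hn), 0)
    = ((a0 + m0) • E0 hn + (a1 + m1) • E1 hn,
       T + (1/2)*(a0*m1 - a1*m0)) := by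
  have := sq_step hn a0 a1 T m0 m1 1
  rw [one_smul] at this
  rw [this]
  refine Prod.ext ?_ ?_
  · show (a0 + 1*m0) • E0 hn + (a1 + 1*m1) • E1 hn = (a0 + m0) • E0 hn + (a1 + m1) • E1 hn
    module
  · show T + (1/2)*(a0*(1*m1) - a1*(1*m0)) = T + (1/2)*(a0*m1 - a1*m0)
    ring

lemma norm_combo_eq (hn : 1 ≤ n) (s0 s1 r : ℝ) (hr : 0 ≤ r) (h : s0^2 + s1^2 = r^2) :
    ‖s0 • E0 hn + s1 • E1 hn‖ = r := by
  have h1 := norm_combo hn s0 s1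
  calc ‖s0 • E0 hn + s1 • E1 hn‖ = Real.sqrt (‖s0 • E0 hn + s1 • E1 hn‖^2) :=
        (Real.sqrt_sq (norm_nonneg _)).symm
    _ = Real.sqrt (r^2) := by rw [h1, h]
    _ = r := Real.sqrt_sq hr

set_option maxHeartbeats 4000000 in
/-- The main quantitative cone property. -/
lemma conePropOf (hn : 1 ≤ n) (lam c : ℝ) (hc0 : 0 < c) (hc : c ≤ 1/20) (hlam : 0 ≤ lam)
    (hK : lam * (4*c/(1-c))^2 ≤ 1) : ConeProp n lam c := by
  intro p R hR f D hf hD x y hx hy hfxy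
  set w : Hpt n := hmul n (hinv n x) y with hw
  set h : E n := w.1
  set t : ℝ := w.2
  set d : ℝ := dK n x y with hdd
  have hdw : d = kor n w := rfl
  have hd0 : 0 ≤ d := kor_nonneg w
  have hhd : ‖h‖ ≤ d := horiz_le_kor w
  set b : ℝ := Real.sqrt |t| with hbdef
  have hb0 : 0 ≤ b := Real.sqrt_nonneg _
  have hb2 : b^2 = |t| := Real.sq_sqrt (abs_nonneg t)
  have hbd : 2*b ≤ d := vert_le_kor w
  have hd2R : d < 2*R := by
    calc d ≤ dK n x p + dK n p y := dK_triangle x p y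
      _ = dK n p x + dK n p y := by rw [dK_symm]
      _ < 2*R := by linarith
  set σ : ℝ := if 0 ≤ t then 1 else -1 with hσ
  set cc : ℝ := σ * b with hccdef
  have hcc2 : cc^2 = b^2 := by
    rw [hccdef, mul_pow, hσ]
    by_cases h0 : 0 ≤ t <;> simp [h0]
  have hbcc : b * cc = t := by
    rw [hccdef, hσ]
    by_cases h0 : 0 ≤ t
    · simp only [h0, if_true, one_mul]
      rw [← pow_two]  -- b * b = b^2
      rw [hb2, abs_of_nonneg h0]
    · simp only [h0, if_false]
      have : b * (-1 * b) = -(b^2) := by ring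
      rw [this, hb2, abs_of_neg (lt_of_not_ge h0)]; ring
  -- membership helper
  have memb : ∀ (P : E n) (T : ℝ), ‖P‖^2 ≤ 2*b^2 → |T| ≤ b^2 →
      dK n p (hmul n x (hmul n ((h, (0:ℝ)) : Hpt n) ((P, T) : Hpt n))) < 5*R := by
    intro P T hP hT
    have step1 : dK n x (hmul n x (hmul n ((h, (0:ℝ)) : Hpt n) ((P, T) : Hpt n)))
        = kor n (hmul n ((h, (0:ℝ)) : Hpt n) ((P, T) : Hpt n)) := by
      unfold dK
      rw [hinv_hmul_cancel]
    calc dK n p (hmul n x (hmul n ((h, (0:ℝ)) : Hpt n) ((P, T) : Hpt n)))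
        ≤ dK n p x + dK n x (hmul n x (hmul n ((h, (0:ℝ)) : Hpt n) ((P, T) : Hpt n))) :=
          dK_triangle _ _ _
      _ ≤ dK n p x + 2*d := by
          rw [step1]
          have := kor_path_bound (n := n) h P T b d hb0 hhd hP hT hbd
          linarith
      _ < 5*R := by linarith
  -- the five waypoints
  set u : E n := b • E0 hn + (0:ℝ) • E1 hn with hu
  set u' : E n := (0:ℝ) • E0 hn + cc • E1 hn with hu'
  set nu : E n := (-b) • E0 hn + (0:ℝ) • E1 hn with hnu
  set nu' : E n := (0:ℝ) • E0 hn + (-cc) • E1 hn with hnu'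
  have hnormu : ‖u‖ = b := norm_combo_eq hn b 0 b hb0 (by ring)
  have hnormu' : ‖u'‖ = b := by
    apply norm_combo_eq hn 0 cc b hb0
    rw [hcc2]; ring
  have hnormnu : ‖nu‖ = b := norm_combo_eq hn (-b) 0 b hb0 (by ring)
  have hnormnu' : ‖nu'‖ = b := by
    apply norm_combo_eq hn 0 (-cc) b hb0
    have : (-cc)^2 = b^2 := by rw [neg_pow]; simp [hcc2]
    rw [this]; ring
  set q2 : Hpt n := hmul n x ((h, (0:ℝ)) : Hpt n) with hq2
  set q3 : Hpt n := hmul n x (hmul n ((h, (0:ℝ)) : Hpt n)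
    ((b • E0 hn + (0:ℝ) • E1 hn, (0:ℝ)) : Hpt n)) with hq3
  set q4 : Hpt n := hmul n x (hmul n ((h, (0:ℝ)) : Hpt n)
    ((b • E0 hn + cc • E1 hn, b*cc/2) : Hpt n)) with hq4
  set q5 : Hpt n := hmul n x (hmul n ((h, (0:ℝ)) : Hpt n)
    (((0:ℝ) • E0 hn + cc • E1 hn, b*cc) : Hpt n)) with hq5
  have habs_st : ∀ s : ℝ, 0 ≤ s → s ≤ 1 → |s * t| ≤ b^2 := by
    intro s h0 h1
    rw [abs_mul, abs_of_nonneg h0, hb2]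
    calc s * |t| ≤ 1 * |t| := mul_le_mul_of_nonneg_right h1 (abs_nonneg t)
      _ = |t| := one_mul _
  -- stage 1
  have hD1 : ∀ s ∈ Icc (0:ℝ) 1,
      ‖D (hmul n x (s • h, 0)) - ContinuousLinearMap.id ℝ (E n)‖ ≤ c := by
    intro s hs
    refine le_of_lt (hD _ ?_)
    calc dK n p (hmul n x (s • h, 0))
        ≤ dK n p x + dK n x (hmul n x (s • h, 0)) := dK_triangle _ _ _
      _ = dK n p x + kor n ((s • h, (0:ℝ)) : Hpt n) := by
          unfold dK; rw [hinv_hmul_cancel]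
      _ = dK n p x + ‖s • h‖ := by rw [kor_horizontal]
      _ < 5*R := by
          have hsh : ‖s • h‖ ≤ d := by
            rw [norm_smul, Real.norm_eq_abs, abs_of_nonneg hs.1]
            calc s * ‖h‖ ≤ 1 * ‖h‖ := mul_le_mul_of_nonneg_right hs.2 (norm_nonneg h)
              _ = ‖h‖ := one_mul _
              _ ≤ d := hhd
          linarith
  have e1 := seg_estimate hf c hc0.le x h hD1
  rw [← hq2] at e1
  -- stage 2
  have hpt2 : ∀ s : ℝ, hmul n q2 (s • u, 0)
      = hmul n x (hmul n ((h, (0:ℝ)) : Hpt n) ((s • u, (0:ℝ)) : Hpt n)) := by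
    intro s; rw [hq2, hmul_assoc]
  have hD2 : ∀ s ∈ Icc (0:ℝ) 1,
      ‖D (hmul n q2 (s • u, 0)) - ContinuousLinearMap.id ℝ (E n)‖ ≤ c := by
    intro s hs
    refine le_of_lt (hD _ ?_)
    rw [hpt2 s]
    apply memb
    · rw [norm_smul, Real.norm_eq_abs, hnormu]
      have : |s| = s := abs_of_nonneg hs.1
      rw [this]
      have hs2 : s^2 ≤ 1 := by nlinarith [hs.1, hs.2]
      nlinarith [mul_le_mul_of_nonneg_right hs2 (sq_nonneg b), sq_nonneg b]
    · rw [abs_zero]; positivity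
  have e2 := seg_estimate hf c hc0.le q2 u hD2
  have hend2 : hmul n q2 ((u, (0:ℝ)) : Hpt n) = q3 := by
    rw [hq2, hmul_assoc, hq3, hu]
  rw [hend2, hnormu] at e2
  -- stage 3
  have hpt3 : ∀ s : ℝ, hmul n q3 (s • u', 0)
      = hmul n x (hmul n ((h, (0:ℝ)) : Hpt n)
        (((b + s*0) • E0 hn + (0 + s*cc) • E1 hn,
          0 + (1/2)*(b*(s*cc) - 0*(s*0))) : Hpt n)) := by
    intro s
    rw [hq3, hmul_assoc, hmul_assoc, hu', sq_step hn b 0 0 0 cc s]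
  have hD3 : ∀ s ∈ Icc (0:ℝ) 1,
      ‖D (hmul n q3 (s • u', 0)) - ContinuousLinearMap.id ℝ (E n)‖ ≤ c := by
    intro s hs
    refine le_of_lt (hD _ ?_)
    rw [hpt3 s]
    apply memb
    · rw [norm_combo]
      have hs2 : s^2 ≤ 1 := by nlinarith [hs.1, hs.2]
      nlinarith [mul_le_mul_of_nonneg_right hs2 (sq_nonneg cc), sq_nonneg b, sq_nonneg cc, hcc2]
    · have heq : 0 + (1/2)*(b*(s*cc) - 0*(s*0)) = (s/2) * t := by
        rw [← hbcc]; ring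
      rw [heq]
      exact habs_st (s/2) (by linarith [hs.1]) (by linarith [hs.2])
  have e3 := seg_estimate hf c hc0.le q3 u' hD3
  have hend3 : hmul n q3 ((u', (0:ℝ)) : Hpt n) = q4 := by
    rw [hq3, hmul_assoc, hmul_assoc, hu', sq_step1 hn b 0 0 0 cc, hq4]
    refine congrArg _ (congrArg _ (Prod.ext ?_ ?_))
    · show (b + 0) • E0 hn + (0 + cc) • E1 hn = b • E0 hn + cc • E1 hn
      module
    · show 0 + (1/2)*(b*cc - 0*0) = b*cc/2
      ring
  rw [hend3, hnormu'] at e3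
  -- stage 4
  have hpt4 : ∀ s : ℝ, hmul n q4 (s • nu, 0)
      = hmul n x (hmul n ((h, (0:ℝ)) : Hpt n)
        (((b + s*(-b)) • E0 hn + (cc + s*0) • E1 hn,
          b*cc/2 + (1/2)*(b*(s*0) - cc*(s*(-b)))) : Hpt n)) := by
    intro s
    rw [hq4, hmul_assoc, hmul_assoc, hnu, sq_step hn b cc (b*cc/2) (-b) 0 s]
  have hD4 : ∀ s ∈ Icc (0:ℝ) 1,
      ‖D (hmul n q4 (s • nu, 0)) - ContinuousLinearMap.id ℝ (E n)‖ ≤ c := by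
    intro s hs
    refine le_of_lt (hD _ ?_)
    rw [hpt4 s]
    apply memb
    · rw [norm_combo]
      have hs2 : (1-s)^2 ≤ 1 := by nlinarith [hs.1, hs.2]
      nlinarith [mul_le_mul_of_nonneg_right hs2 (sq_nonneg b), sq_nonneg b, hcc2]
    · have heq : b*cc/2 + (1/2)*(b*(s*0) - cc*(s*(-b))) = ((1+s)/2) * t := by
        rw [← hbcc]; ring
      rw [heq]
      exact habs_st ((1+s)/2) (by linarith [hs.1]) (by linarith [hs.2])
  have e4 := seg_estimate hf c hc0.le q4 nu hD4
  have hend4 : hmul n q4 ((nu, (0:ℝ)) : Hpt n) = q5 := by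
    rw [hq4, hmul_assoc, hmul_assoc, hnu, sq_step1 hn b cc (b*cc/2) (-b) 0, hq5]
    refine congrArg _ (congrArg _ (Prod.ext ?_ ?_))
    · show (b + -b) • E0 hn + (cc + 0) • E1 hn = (0:ℝ) • E0 hn + cc • E1 hn
      module
    · show b*cc/2 + (1/2)*(b*0 - cc*(-b)) = b*cc
      ring
  rw [hend4, hnormnu] at e4
  -- stage 5
  have hpt5 : ∀ s : ℝ, hmul n q5 (s • nu', 0)
      = hmul n x (hmul n ((h, (0:ℝ)) : Hpt n)
        (((0 + s*0) • E0 hn + (cc + s*(-cc)) • E1 hn,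
          b*cc + (1/2)*(0*(s*(-cc)) - cc*(s*0))) : Hpt n)) := by
    intro s
    rw [hq5, hmul_assoc, hmul_assoc, hnu', sq_step hn 0 cc (b*cc) 0 (-cc) s]
  have hD5 : ∀ s ∈ Icc (0:ℝ) 1,
      ‖D (hmul n q5 (s • nu', 0)) - ContinuousLinearMap.id ℝ (E n)‖ ≤ c := by
    intro s hs
    refine le_of_lt (hD _ ?_)
    rw [hpt5 s]
    apply memb
    · rw [norm_combo]
      have hs2 : (1-s)^2 ≤ 1 := by nlinarith [hs.1, hs.2]
      nlinarith [mul_le_mul_of_nonneg_right hs2 (sq_nonneg cc), sq_nonneg b, sq_nonneg cc, hcc2]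
    · have heq : b*cc + (1/2)*(0*(s*(-cc)) - cc*(s*0)) = 1 * t := by
        rw [← hbcc]; ring
      rw [heq]
      exact habs_st 1 zero_le_one le_rfl
  have e5 := seg_estimate hf c hc0.le q5 nu' hD5
  have hend5 : hmul n q5 ((nu', (0:ℝ)) : Hpt n) = y := by
    rw [hq5, hmul_assoc, hmul_assoc, hnu', sq_step1 hn 0 cc (b*cc) 0 (-cc)]
    have hyw : hmul n x w = y := by rw [hw]; exact hmul_hinv_cancel x y
    refine (congrArg (hmul n x) ?_).trans hyw
    have h00 : ((0:ℝ) + 0) • E0 hn + (cc + -cc) • E1 hn = (0 : E n) := by module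
    refine Prod.ext ?_ ?_
    · show h + (((0:ℝ) + 0) • E0 hn + (cc + -cc) • E1 hn) = w.1
      rw [h00]
      simp; rfl
    · show 0 + (b*cc + (1/2)*(0*(-cc) - cc*0))
          + (1/2) * omegaF n h (((0:ℝ) + 0) • E0 hn + (cc + -cc) • E1 hn) = w.2
      rw [h00, omegaF_zero_right]
      have hw2 : w.2 = t := rfl
      rw [hw2, ← hbcc]
      ring
  rw [hend5, hnormnu'] at e5
  -- telescope
  have huu : u + nu = 0 := by rw [hu, hnu]; module
  have huu' : u' + nu' = 0 := by rw [hu', hnu']; module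
  have hsum : (f q2 - f x - h) + (f q3 - f q2 - u) + (f q4 - f q3 - u')
      + (f q5 - f q4 - nu) + (f y - f q5 - nu') = -h := by
    have tele : (f q2 - f x - h) + (f q3 - f q2 - u) + (f q4 - f q3 - u')
        + (f q5 - f q4 - nu) + (f y - f q5 - nu')
        = (f y - f x) - h - (u + nu) - (u' + nu') := by abel
    rw [tele, huu, huu', ← hfxy]
    simp
  have hnorm : ‖h‖ ≤ c*‖h‖ + c*b + c*b + c*b + c*b := by
    have h0 : ‖h‖ = ‖(f q2 - f x - h) + (f q3 - f q2 - u) + (f q4 - f q3 - u')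
        + (f q5 - f q4 - nu) + (f y - f q5 - nu')‖ := by
      rw [hsum, norm_neg]
    calc ‖h‖ = ‖(f q2 - f x - h) + (f q3 - f q2 - u) + (f q4 - f q3 - u')
        + (f q5 - f q4 - nu) + (f y - f q5 - nu')‖ := h0
      _ ≤ ‖(f q2 - f x - h) + (f q3 - f q2 - u) + (f q4 - f q3 - u')
          + (f q5 - f q4 - nu)‖ + ‖f y - f q5 - nu'‖ := norm_add_le _ _
      _ ≤ ‖(f q2 - f x - h) + (f q3 - f q2 - u) + (f q4 - f q3 - u')‖
          + ‖f q5 - f q4 - nu‖ + ‖f y - f q5 - nu'‖ := by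
            have := norm_add_le ((f q2 - f x - h) + (f q3 - f q2 - u) + (f q4 - f q3 - u'))
              (f q5 - f q4 - nu)
            linarith
      _ ≤ ‖(f q2 - f x - h) + (f q3 - f q2 - u)‖ + ‖f q4 - f q3 - u'‖
          + ‖f q5 - f q4 - nu‖ + ‖f y - f q5 - nu'‖ := by
            have := norm_add_le ((f q2 - f x - h) + (f q3 - f q2 - u)) (f q4 - f q3 - u')
            linarith
      _ ≤ ‖f q2 - f x - h‖ + ‖f q3 - f q2 - u‖ + ‖f q4 - f q3 - u'‖
          + ‖f q5 - f q4 - nu‖ + ‖f y - f q5 - nu'‖ := by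
            have := norm_add_le (f q2 - f x - h) (f q3 - f q2 - u)
            linarith
      _ ≤ c*‖h‖ + c*b + c*b + c*b + c*b := by linarith [e1, e2, e3, e4, e5]
  -- arithmetic conclusion
  have hc1 : c < 1 := by linarith
  have hhK : ‖h‖ ≤ (4*c/(1-c)) * b := by
    rw [div_mul_eq_mul_div, le_div_iff₀ (by linarith)]
    nlinarith [hnorm]
  have hK0 : 0 ≤ 4*c/(1-c) := div_nonneg (by linarith) (by linarith)
  have hKle1 : 4*c/(1-c) ≤ 1 := by
    rw [div_le_one (by linarith)]; linarith
  have hb4 : b^4 = t^2 := by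
    have : b^4 = (b^2)^2 := by ring
    rw [this, hb2, sq_abs]
  constructor
  · -- d^2/16 ≤ |t|
    have hkor4 : d^4 = ‖h‖^4 + 16*t^2 := by rw [hdw, kor_pow4]
    have hh4 : ‖h‖^4 ≤ t^2 := by
      calc ‖h‖^4 ≤ ((4*c/(1-c)) * b)^4 := pow_le_pow_left₀ (norm_nonneg h) hhK 4
        _ = (4*c/(1-c))^4 * b^4 := by ring
        _ ≤ 1 * b^4 := by
            apply mul_le_mul_of_nonneg_right _ (by positivity)
            calc (4*c/(1-c))^4 ≤ 1^4 := pow_le_pow_left₀ hK0 hKle1 4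
              _ = 1 := one_pow 4
        _ = t^2 := by rw [one_mul, hb4]
    have hd4 : d^4 ≤ 256 * t^2 := by nlinarith [sq_nonneg t]
    have hd2 : d^2 ≤ 16*|t| := by
      apply le_of_pow_le_pow_left₀ two_ne_zero (by positivity)
      calc (d^2)^2 = d^4 := by ring
        _ ≤ 256 * t^2 := hd4
        _ = (16*|t|)^2 := by rw [mul_pow, sq_abs]; norm_num
    linarith
  · -- lam * ‖h‖^2 ≤ |t|
    have hh2 : ‖h‖^2 ≤ (4*c/(1-c))^2 * |t| := by
      calc ‖h‖^2 ≤ ((4*c/(1-c)) * b)^2 := pow_le_pow_left₀ (norm_nonneg h) hhK 2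
        _ = (4*c/(1-c))^2 * b^2 := by ring
        _ = (4*c/(1-c))^2 * |t| := by rw [hb2]
    calc lam * ‖h‖^2 ≤ lam * ((4*c/(1-c))^2 * |t|) :=
          mul_le_mul_of_nonneg_left hh2 hlam
      _ = (lam * (4*c/(1-c))^2) * |t| := by ring
      _ ≤ 1 * |t| := mul_le_mul_of_nonneg_right hK (abs_nonneg t)
      _ = |t| := one_mul _



/-- **Fibers of near-identity `C¹_H` maps satisfy a vertical cone condition**
(Corollary 2.4): for every `λ > 0` there is `c > 0` with the cone property, and for
`λ = 2` one may take `c = 1/20`. -/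
theorem fibers_vertical_cone (n : ℕ) (hn : 1 ≤ n) :
    (∀ lam : ℝ, 0 < lam → ∃ c : ℝ, 0 < c ∧ ConeProp n lam c) ∧
    ConeProp n 2 (1 / 20) := by
  constructor
  · intro lam hlam
    have hs : 0 < Real.sqrt lam := Real.sqrt_pos.mpr hlam
    set c := min (1/20 : ℝ) (1/(5*Real.sqrt lam)) with hcdef
    have hc0 : 0 < c := lt_min (by norm_num) (by positivity)
    have hc20 : c ≤ 1/20 := min_le_left _ _
    refine ⟨c, hc0, conePropOf hn lam c hc0 hc20 hlam.le ?_⟩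
    have hKle : 4*c/(1-c) ≤ 5*c := by
      rw [div_le_iff₀ (by linarith)]
      nlinarith [hc0, hc20]
    have h5c : 5*c ≤ 1/Real.sqrt lam := by
      have hcr : c ≤ 1/(5*Real.sqrt lam) := min_le_right _ _
      calc 5*c ≤ 5*(1/(5*Real.sqrt lam)) := by linarith
        _ = 1/Real.sqrt lam := by field_simp
    have hK0 : 0 ≤ 4*c/(1-c) := div_nonneg (by linarith) (by linarith)
    calc lam * (4*c/(1-c))^2 ≤ lam * (1/Real.sqrt lam)^2 := by
          apply mul_le_mul_of_nonneg_left _ hlam.le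
          exact pow_le_pow_left₀ hK0 (le_trans hKle h5c) 2
      _ = 1 := by
          rw [div_pow, one_pow, Real.sq_sqrt hlam.le]
          field_simp
  · exact conePropOf hn 2 (1/20) (by norm_num) le_rfl (by norm_num) (by norm_num)
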